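/- For the TRIP-Stern sequence for (e,e,12), the level sums satisfy S(n) = 2·S(n−1) + 2·S(n−2) for all n ≥ 2, and are given in closed form by S(n) = (1/6)·((9 − 5√3)(1 − √3)ⁿ + (9 + 5√3)(1 + √3)ⁿ) for all n ≥ 0 (as an identity of real numbers). -/
import Mathlib


/-- `f₀(a,b,c) = (b,c,a+c)` for the triplet `(e,e,12)`. -/
def f0 (p : ℤ × ℤ × ℤ) : ℤ × ℤ × ℤ := (p.2.1, p.2.2, p.1 + p.2.2)

/-- `f₁(a,b,c) = (b,a,a+c)` for the triplet `(e,e,12)`. -/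
def f1 (p : ℤ × ℤ × ℤ) : ℤ × ℤ × ℤ := (p.2.1, p.1, p.1 + p.2.2)

/-- One step of the TRIP-Stern tree: apply `f₁` on a `true` and `f₀` on a `false`. -/
def step (p : ℤ × ℤ × ℤ) (i : Bool) : ℤ × ℤ × ℤ := if i then f1 p else f0 p

/-- `Δ(v) = f_{iₙ}(⋯ f_{i₁}(1,1,1) ⋯)`, applying `f_{i₁}` first. -/
def delta (v : List Bool) : ℤ × ℤ × ℤ := v.foldl step (1, 1, 1)

/-- `S n` is the sum of all three coordinates of all `2ⁿ` level-`n` triples. -/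
def S (n : ℕ) : ℤ :=
  ∑ v : Fin n → Bool,
    ((delta (List.ofFn v)).1 + (delta (List.ofFn v)).2.1 + (delta (List.ofFn v)).2.2)

/-- Coordinate sums at level `n`. -/
def A (n : ℕ) : ℤ := ∑ v : Fin n → Bool, (delta (List.ofFn v)).1
def B (n : ℕ) : ℤ := ∑ v : Fin n → Bool, (delta (List.ofFn v)).2.1
def C (n : ℕ) : ℤ := ∑ v : Fin n → Bool, (delta (List.ofFn v)).2.2

lemma S_eq (n : ℕ) : S n = A n + B n + C n := by
  simp [S, A, B, C, Finset.sum_add_distrib]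

lemma ofFn_snoc {n : ℕ} (v : Fin n → Bool) (b : Bool) :
    List.ofFn (Fin.snoc v b : Fin (n+1) → Bool) = (List.ofFn v) ++ [b] := by
  rw [List.ofFn_succ']
  simp [Fin.snoc_castSucc, Fin.snoc_last, List.concat_eq_append]

lemma delta_snoc {n : ℕ} (v : Fin n → Bool) (b : Bool) :
    delta (List.ofFn (Fin.snoc v b : Fin (n+1) → Bool))
      = step (delta (List.ofFn v)) b := by
  rw [ofFn_snoc, delta, List.foldl_append]
  rfl

lemma sum_succ (g : ℤ × ℤ × ℤ → ℤ) (n : ℕ) :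
    (∑ v : Fin (n+1) → Bool, g (delta (List.ofFn v)))
      = ∑ v : Fin n → Bool,
          (g (step (delta (List.ofFn v)) false) + g (step (delta (List.ofFn v)) true)) := by
  have h := Fintype.sum_equiv (Fin.snocEquiv (fun _ => Bool))
      (fun p : Bool × (Fin n → Bool) => g (delta (List.ofFn (Fin.snoc p.2 p.1 : Fin (n+1) → Bool))))
      (fun v : Fin (n+1) → Bool => g (delta (List.ofFn v)))
      (fun p => rfl)
  rw [← h, Fintype.sum_prod_type_right]
  simp only [Fintype.sum_bool, delta_snoc]
  exact Finset.sum_congr rfl (fun _ _ => add_comm _ _)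

lemma A_succ (n : ℕ) : A (n+1) = 2 * B n := by
  rw [A, sum_succ (fun p => p.1) n]
  simp [step, f0, f1, B, two_mul, Finset.sum_add_distrib]

lemma B_succ (n : ℕ) : B (n+1) = A n + C n := by
  rw [B, sum_succ (fun p => p.2.1) n]
  simp [step, f0, f1, A, C, Finset.sum_add_distrib, add_comm]

lemma C_succ (n : ℕ) : C (n+1) = 2 * A n + 2 * C n := by
  rw [C, sum_succ (fun p => p.2.2) n]
  simp [step, f0, f1, A, C, two_mul, Finset.sum_add_distrib]
  ring

lemma S_rec (n : ℕ) : S (n + 2) = 2 * S (n + 1) + 2 * S n := by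
  show S (n+1+1) = 2 * S (n+1) + 2 * S n
  rw [S_eq (n+1+1), S_eq (n+1), S_eq n]
  simp only [A_succ, B_succ, C_succ]
  ring

lemma S_zero : S 0 = 3 := by decide
lemma S_one : S 1 = 8 := by decide

/-- For the TRIP-Stern sequence for `(e,e,12)`, the level sums satisfy
`S(n) = 2·S(n−1) + 2·S(n−2)` for all `n ≥ 2`, and are given in closed form by
`S(n) = (1/6)·((9 − 5√3)(1 − √3)ⁿ + (9 + 5√3)(1 + √3)ⁿ)` for all `n ≥ 0`. -/
theorem levelSum_e_e_12 :
    (∀ n : ℕ, 2 ≤ n → S n = 2 * S (n - 1) + 2 * S (n - 2)) ∧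
    (∀ n : ℕ, (S n : ℝ) =
      (1 / 6) * ((9 - 5 * Real.sqrt 3) * (1 - Real.sqrt 3) ^ n
        + (9 + 5 * Real.sqrt 3) * (1 + Real.sqrt 3) ^ n)) := by
  constructor
  · intro n hn
    obtain ⟨m, rfl⟩ : ∃ m, n = m + 2 := ⟨n - 2, by omega⟩
    simpa using S_rec m
  · have hs : Real.sqrt 3 ^ 2 = 3 := Real.sq_sqrt (by norm_num)
    have key : ∀ n : ℕ,
        ((S n : ℝ) = (1 / 6) * ((9 - 5 * Real.sqrt 3) * (1 - Real.sqrt 3) ^ n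
          + (9 + 5 * Real.sqrt 3) * (1 + Real.sqrt 3) ^ n)) ∧
        ((S (n+1) : ℝ) = (1 / 6) * ((9 - 5 * Real.sqrt 3) * (1 - Real.sqrt 3) ^ (n+1)
          + (9 + 5 * Real.sqrt 3) * (1 + Real.sqrt 3) ^ (n+1))) := by
      intro n
      induction n with
      | zero =>
        constructor
        · rw [S_zero]; push_cast; nlinarith [hs]
        · rw [S_one]; push_cast; nlinarith [hs]
      | succ k ih =>
        refine ⟨ih.2, ?_⟩
        have := S_rec k
        have hcast : (S (k+2) : ℝ) = 2 * (S (k+1) : ℝ) + 2 * (S k : ℝ) := by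
          exact_mod_cast this
        rw [hcast, ih.1, ih.2]
        have e1 : (1 - Real.sqrt 3) ^ (k+2)
            = (1 - Real.sqrt 3) ^ k * (4 - 2 * Real.sqrt 3) := by
          rw [pow_add]
          have : (1 - Real.sqrt 3) ^ 2 = 4 - 2 * Real.sqrt 3 := by
            linear_combination hs
          rw [this]
        have e2 : (1 + Real.sqrt 3) ^ (k+2)
            = (1 + Real.sqrt 3) ^ k * (4 + 2 * Real.sqrt 3) := by
          rw [pow_add]
          have : (1 + Real.sqrt 3) ^ 2 = 4 + 2 * Real.sqrt 3 := by
            linear_combination hs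
          rw [this]
        rw [e1, e2, pow_succ]
        ring
    exact fun n => (key n).1
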